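/- For every integer n ≥ 1, B(n) = (-1)^{n+1} + 2·Σ_{k=0}^{⌊n/2⌋} (2k)!·S(n,2k). -/

import Mathlib

open Finset

/-- Stirling numbers of the second kind. -/
def S : ℕ → ℕ → ℕ
  | 0, 0 => 1
  | 0, _ + 1 => 0
  | _ + 1, 0 => 0
  | n + 1, k + 1 => (k + 1) * S n (k + 1) + S n k

/-- Ordered Bell (Fubini) numbers. -/
def B (n : ℕ) : ℕ := ∑ k ∈ range (n + 1), k.factorial * S n k

lemma S_eq_zero (n : ℕ) : ∀ k, n < k → S n k = 0 := by
  induction n with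
  | zero => intro k hk
            match k, hk with
            | k+1, _ => rfl
  | succ n ih =>
    intro k hk
    match k, hk with
    | k+1, hk =>
      show (k+1) * S n (k+1) + S n k = 0
      rw [ih (k+1) (by omega), ih k (by omega)]
      ring

lemma key (n : ℕ) : ∑ k ∈ range (n+1), (-1:ℤ)^k * k.factorial * S n k = (-1)^n := by
  induction n with
  | zero => simp [S]
  | succ n ih =>
    rw [Finset.sum_range_succ']
    have h0 : S (n+1) 0 = 0 := rfl
    rw [h0]
    have hterm : ∀ i ∈ range (n+1),
        (-1:ℤ)^(i+1) * (i+1).factorial * S (n+1) (i+1) =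
          (((-1:ℤ)^(i+1) * (i+2).factorial * S n (i+1)) - ((-1:ℤ)^i * (i+1).factorial * S n i))
          - ((-1:ℤ)^(i+1) * (i+1).factorial * S n (i+1)) := by
      intro i _
      have hS : S (n+1) (i+1) = (i+1) * S n (i+1) + S n i := rfl
      rw [hS]
      have h2 : ((i+2).factorial : ℤ) = (i+2) * (i+1).factorial := by
        push_cast [Nat.factorial_succ]; ring
      rw [h2]
      push_cast
      ring
    rw [Finset.sum_congr rfl hterm, Finset.sum_sub_distrib, Finset.sum_range_sub
      (fun i => (-1:ℤ)^i * (i+1).factorial * S n i)]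
    have hz : S n (n+1) = 0 := S_eq_zero n (n+1) (by omega)
    have hshift : ∑ i ∈ range (n+1), (-1:ℤ)^(i+1) * (i+1).factorial * S n (i+1)
        = (∑ k ∈ range (n+2), (-1:ℤ)^k * k.factorial * S n k) - (-1:ℤ)^0 * (0).factorial * S n 0 := by
      rw [Finset.sum_range_succ' (fun k => (-1:ℤ)^k * k.factorial * S n k) (n+1)]; ring
    rw [hshift, Finset.sum_range_succ, ih, hz]
    simp [S]
    ring

theorem stmt3 (n : ℕ) (hn : 1 ≤ n) :
    (B n : ℤ) = (-1) ^ (n + 1) +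
      2 * ∑ k ∈ range (n / 2 + 1), ((2 * k).factorial * S n (2 * k) : ℤ) := by
  have hsplit : (B n : ℤ) + (-1)^n = ∑ k ∈ range (n+1), ((1:ℤ) + (-1)^k) * k.factorial * S n k := by
    rw [← key n]
    unfold B
    push_cast
    rw [← Finset.sum_add_distrib]
    apply Finset.sum_congr rfl
    intro k _
    ring
  have heven : ∑ k ∈ range (n+1), ((1:ℤ) + (-1)^k) * k.factorial * S n k
      = ∑ k ∈ (range (n+1)).filter (fun k => Even k), 2 * ((k.factorial * S n k : ℕ) : ℤ) := by
    rw [Finset.sum_filter]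
    apply Finset.sum_congr rfl
    intro k _
    by_cases hk : Even k
    · rw [if_pos hk, hk.neg_one_pow]
      push_cast; ring
    · rw [if_neg hk, (Nat.not_even_iff_odd.mp hk).neg_one_pow]
      ring
  have hbij : ∑ k ∈ (range (n+1)).filter (fun k => Even k), 2 * ((k.factorial * S n k : ℕ) : ℤ)
      = ∑ j ∈ range (n/2+1), 2 * (((2*j).factorial * S n (2*j) : ℕ) : ℤ) := by
    apply Finset.sum_nbij' (fun k => k / 2) (fun j => 2 * j)
    · intro a ha
      simp only [Finset.mem_filter, Finset.mem_range] at ha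
      simp only [Finset.mem_range]
      omega
    · intro a ha
      simp only [Finset.mem_range] at ha
      simp only [Finset.mem_filter, Finset.mem_range]
      constructor
      · omega
      · exact even_two_mul a
    · intro a ha
      simp only [Finset.mem_filter, Finset.mem_range] at ha
      obtain ⟨m, hm⟩ := ha.2
      omega
    · intro a ha; omega
    · intro a ha
      simp only [Finset.mem_filter, Finset.mem_range] at ha
      obtain ⟨m, hm⟩ := ha.2
      have : 2 * (a / 2) = a := by omega
      rw [this]
  have : (B n : ℤ) = -(-1)^n + ∑ j ∈ range (n/2+1), 2 * (((2*j).factorial * S n (2*j) : ℕ) : ℤ) := by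
    rw [← hbij, ← heven, ← hsplit]; ring
  rw [this, Finset.mul_sum]
  push_cast
  ring
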